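/- A finite commutative ring R satisfies Γ̃(R) = Z*(Γ(R)) (i.e., for all distinct x, y ∈ Z(R)*, xy = 0 implies x + y ∈ Z(R)) if and only if Z(R) is an (additive) ideal of R. -/

import Mathlib

def ZDStar {R : Type*} [CommRing R] (x : R) : Prop := x ≠ 0 ∧ ∃ y ≠ 0, x * y = 0

lemma exists_idem_pow {M : Type*} [Monoid M] [Finite M] (a : M) :
    ∃ n > 0, IsIdempotentElem (a ^ n) := by
  have : ¬ Function.Injective (fun n : ℕ => a ^ n) :=
    not_injective_infinite_finite _
  rw [Function.not_injective_iff] at this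
  obtain ⟨m, n, hmn, hne⟩ := this
  wlog hlt : m < n generalizing m n
  · exact this n m hmn.symm hne.symm (by omega)
  set k := n - m with hk
  have hk0 : 0 < k := by omega
  have step : ∀ s, m ≤ s → a ^ (s + k) = a ^ s := by
    intro s hs
    have h1 : s + k = (s - m) + n := by omega
    have h2 : s = (s - m) + m := by omega
    rw [h1, pow_add, ← hmn, ← pow_add, ← h2]
  have key : ∀ j s, m ≤ s → a ^ (s + j * k) = a ^ s := by
    intro j
    induction j with
    | zero => simp
    | succ j ih =>
      intro s hs
      have : s + (j + 1) * k = (s + k) + j * k := by ring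
      rw [this, ih (s + k) (by omega), step s hs]
  refine ⟨(m + 1) * k, by positivity, ?_⟩
  unfold IsIdempotentElem
  rw [← pow_add]
  have hkey := key (m + 1) ((m + 1) * k) (by nlinarith)
  rw [← hkey]

theorem stmt7 {R : Type*} [CommRing R] [Nontrivial R] [Finite R] :
    (∀ x y : R, ZDStar x → ZDStar y → x ≠ y → x * y = 0 →
        ∃ z ≠ 0, (x + y) * z = 0) ↔
    ∃ I : Ideal R, (I : Set R) = {x : R | ∃ y ≠ 0, x * y = 0} := by
  constructor
  · intro h
    -- No nontrivial idempotents, hence every element is nilpotent or a unit.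
    have nilun : ∀ a : R, IsNilpotent a ∨ IsUnit a := by
      intro a
      obtain ⟨n, hn, he⟩ := exists_idem_pow a
      set e := a ^ n with hedef
      by_cases he0 : e = 0
      · exact Or.inl ⟨n, he0⟩
      by_cases he1 : e = 1
      · right
        have : a * a ^ (n - 1) = 1 := by
          rw [← pow_succ']
          have : n - 1 + 1 = n := by omega
          rw [this, ← hedef, he1]
        exact IsUnit.of_mul_eq_one _ this
      · exfalso
        have hmul : e * (1 - e) = 0 := by
          have := he
          unfold IsIdempotentElem at this
          rw [mul_sub, mul_one, this, sub_self]
        have h1e : (1 : R) - e ≠ 0 := fun hc => he1 (by linear_combination -hc)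
        have hne : e ≠ 1 - e := by
          intro hc
          apply he0
          calc e = e * e := he.symm
            _ = e * (1 - e) := by rw [← hc]
            _ = 0 := hmul
        obtain ⟨z, hz, hz0⟩ := h e (1 - e) ⟨he0, 1 - e, h1e, hmul⟩
          ⟨h1e, e, he0, by linear_combination hmul⟩ hne hmul
        apply hz
        have : e + (1 - e) = 1 := by ring
        rw [this, one_mul] at hz0
        exact hz0
    have : IsLocalRing R := by
      apply IsLocalRing.of_isUnit_or_isUnit_one_sub_self
      intro a
      rcases nilun a with hn | hu
      · exact Or.inr hn.isUnit_one_sub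
      · exact Or.inl hu
    refine ⟨IsLocalRing.maximalIdeal R, ?_⟩
    ext x
    simp only [SetLike.mem_coe, IsLocalRing.mem_maximalIdeal, mem_nonunits_iff,
      Set.mem_setOf_eq]
    constructor
    · intro hx
      by_contra hc
      push_neg at hc
      have hinj : Function.Injective (fun y : R => x * y) := by
        intro a b hab
        simp only at hab
        have h0 : x * (a - b) = 0 := by rw [mul_sub, hab, sub_self]
        by_contra hne
        exact hc (a - b) (fun h' => hne (sub_eq_zero.mp h')) h0
      have hsurj := Finite.injective_iff_surjective.mp hinj
      obtain ⟨z, hz⟩ := hsurj 1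
      exact hx (IsUnit.of_mul_eq_one _ hz)
    · rintro ⟨y, hy, hxy⟩ hu
      obtain ⟨u, hu'⟩ := hu
      apply hy
      calc y = (↑u⁻¹ * x) * y := by rw [← hu', Units.inv_mul, one_mul]
        _ = ↑u⁻¹ * (x * y) := by ring
        _ = 0 := by rw [hxy, mul_zero]
  · rintro ⟨I, hI⟩ x y hx hy _ _
    have hxI : x ∈ I := by rw [← SetLike.mem_coe, hI]; exact hx.2
    have hyI : y ∈ I := by rw [← SetLike.mem_coe, hI]; exact hy.2
    have : x + y ∈ I := I.add_mem hxI hyI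
    rw [← SetLike.mem_coe, hI] at this
    exact this
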